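/- Let n ≥ 3 be an integer and p > 3 a prime with p ≡ 1 (mod n), and set m = (p−1)/n. Then ∑_{k=0}^{p−1} C(m+k, m)^n · (∑_{j=1}^k 1/j)² ≡ ∑_{k=0}^{p−1} C(m+k, m)^n · (∑_{j=1}^{k+m} 1/j)² (mod p), as a congruence between p-integral rationals. -/

import Mathlib

open Finset

namespace HSC

/-- `∑_{j=1}^N 1/j` as an element of `ℚ_[p]`. -/
noncomputable def Hq (p : ℕ) [Fact p.Prime] (N : ℕ) : ℚ_[p] :=
  ∑ j ∈ Finset.Icc 1 N, (1 : ℚ_[p]) / (j : ℚ_[p])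

variable {p : ℕ} [hp : Fact p.Prime]

/-- Ultrametric bound for finite sums in `ℚ_[p]`. -/
lemma norm_sum_le {α : Type*} {s : Finset α} {f : α → ℚ_[p]} {δ : ℝ} (hδ : 0 ≤ δ)
    (h : ∀ a ∈ s, ‖f a‖ ≤ δ) : ‖∑ a ∈ s, f a‖ ≤ δ := by
  classical
  induction s using Finset.cons_induction with
  | empty => simpa using hδ
  | cons a s ha ih =>
    rw [Finset.sum_cons]
    exact le_trans (Padic.nonarchimedean _ _)
      (max_le (h a (Finset.mem_cons_self _ _))
        (ih fun b hb => h b (Finset.mem_cons_of_mem hb)))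

lemma norm_sub_le_max (x y : ℚ_[p]) : ‖x - y‖ ≤ max ‖x‖ ‖y‖ := by
  rw [sub_eq_add_neg]
  simpa using Padic.nonarchimedean x (-y)

lemma mul_congr {a b c d : ℚ_[p]} {δ : ℝ} (hb : ‖b‖ ≤ 1) (hc : ‖c‖ ≤ 1)
    (h1 : ‖a - c‖ ≤ δ) (h2 : ‖b - d‖ ≤ δ) : ‖a * b - c * d‖ ≤ δ := by
  have hδ : 0 ≤ δ := le_trans (norm_nonneg _) h1
  have e : a * b - c * d = (a - c) * b + c * (b - d) := by ring
  rw [e]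
  refine le_trans (Padic.nonarchimedean _ _) (max_le ?_ ?_)
  · calc ‖(a - c) * b‖ = ‖a - c‖ * ‖b‖ := norm_mul _ _
      _ ≤ δ * 1 := mul_le_mul h1 hb (norm_nonneg _) hδ
      _ = δ := mul_one δ
  · calc ‖c * (b - d)‖ = ‖c‖ * ‖b - d‖ := norm_mul _ _
      _ ≤ 1 * δ := mul_le_mul hc h2 (norm_nonneg _) one_pos.le
      _ = δ := one_mul δ

lemma pow_congr {a c : ℚ_[p]} {δ : ℝ} (ha : ‖a‖ ≤ 1) (hc : ‖c‖ ≤ 1)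
    (h : ‖a - c‖ ≤ δ) (t : ℕ) : ‖a ^ t - c ^ t‖ ≤ δ := by
  induction t with
  | zero => simpa using le_trans (norm_nonneg _) h
  | succ t iht =>
    rw [pow_succ, pow_succ]
    exact mul_congr ha (by simpa [norm_pow] using pow_le_one₀ (norm_nonneg c) hc) iht h

lemma norm_nat_le_one (a : ℕ) : ‖(a : ℚ_[p])‖ ≤ 1 := by
  simpa using Padic.norm_int_le_one (p := p) (a : ℤ)

lemma norm_nat_eq_one {a : ℕ} (h : ¬ p ∣ a) : ‖(a : ℚ_[p])‖ = 1 := by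
  refine le_antisymm (norm_nat_le_one a) ?_
  by_contra hlt
  push_neg at hlt
  have : ‖((a : ℤ) : ℚ_[p])‖ < 1 := by simpa using hlt
  rw [Padic.norm_intCast_lt_one_iff] at this
  exact h (by exact_mod_cast this)

lemma norm_nat_le_inv {a : ℕ} (h : p ∣ a) : ‖(a : ℚ_[p])‖ ≤ (p : ℝ)⁻¹ := by
  have : ‖((a : ℤ) : ℚ_[p])‖ ≤ (p : ℝ) ^ (-(1 : ℕ) : ℤ) := by
    rw [Padic.norm_int_le_pow_iff_dvd]
    exact_mod_cast (by simpa using h)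
  simpa using this

lemma norm_one_div_nat_eq_one {j : ℕ} (h : ¬ p ∣ j) :
    ‖(1 : ℚ_[p]) / (j : ℚ_[p])‖ = 1 := by
  rw [norm_div, norm_one, norm_nat_eq_one h]
  norm_num

lemma Hq_norm_le_one {N : ℕ} (hN : N < p) : ‖Hq p N‖ ≤ 1 := by
  refine norm_sum_le zero_le_one fun j hj => ?_
  rw [Finset.mem_Icc] at hj
  refine le_of_eq (norm_one_div_nat_eq_one fun hd => ?_)
  have := Nat.le_of_dvd (by omega) hd
  omega

lemma Hq_norm_le_p {N : ℕ} (hN : N < 2 * p) : ‖Hq p N‖ ≤ (p : ℝ) := by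
  have hp1 : (1 : ℝ) ≤ (p : ℝ) := by exact_mod_cast hp.out.one_lt.le
  refine norm_sum_le (by linarith) fun j hj => ?_
  rw [Finset.mem_Icc] at hj
  by_cases hd : p ∣ j
  · have hj_eq : j = p := by
      obtain ⟨c, rfl⟩ := hd
      have hc : c = 1 := by
        rcases Nat.lt_or_ge c 2 with h2 | h2
        · interval_cases c <;> omega
        · exfalso; have := hp.out.two_le; nlinarith
      simp [hc]
    subst hj_eq
    rw [norm_div, norm_one, Padic.norm_p, one_div, inv_inv]
  · rw [norm_one_div_nat_eq_one hd]
    exact hp1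

lemma desc_congr (a : ℕ) : ∀ t : ℕ, t + a < p →
    (((p - 1 - a).descFactorial t : ℕ) : ZMod p)
      = (-1) ^ t * (((a + 1).ascFactorial t : ℕ) : ZMod p)
  | 0, _ => by simp
  | t + 1, h => by
    have iht := desc_congr a t (by omega)
    rw [Nat.descFactorial_succ, Nat.ascFactorial_succ]
    push_cast
    rw [iht]
    have hnat : (p - 1 - a - t) + (a + 1 + t) = p := by omega
    have hz : ((p - 1 - a - t : ℕ) : ZMod p) = -((a : ZMod p) + 1 + (t : ZMod p)) := by
      have h0 : ((p - 1 - a - t : ℕ) : ZMod p) + ((a + 1 + t : ℕ) : ZMod p) = 0 := by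
        rw [← Nat.cast_add, hnat, ZMod.natCast_self]
      push_cast at h0
      linear_combination h0
    push_cast at hz
    rw [hz]
    ring

lemma choose_zmod_congr {m k : ℕ} (hmk : m + k ≤ p - 1) (hp1 : 1 ≤ p) :
    (((p - 1 - k).choose m : ℕ) : ZMod p)
      = (-1) ^ m * (((m + k).choose m : ℕ) : ZMod p) := by
  have hd := desc_congr (p := p) k m (by omega)
  rw [Nat.descFactorial_eq_factorial_mul_choose] at hd
  have hasc : (k + 1).ascFactorial m = (k + m).descFactorial m :=
    (Nat.add_descFactorial_eq_ascFactorial k m).symm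
  rw [hasc, Nat.descFactorial_eq_factorial_mul_choose] at hd
  push_cast at hd
  have hfac : ((Nat.factorial m : ℕ) : ZMod p) ≠ 0 := by
    rw [Ne, ZMod.natCast_eq_zero_iff]
    intro hdvd
    have := (Nat.Prime.dvd_factorial hp.out).mp hdvd
    omega
  have hd' : ((Nat.factorial m : ℕ) : ZMod p) * (((p - 1 - k).choose m : ℕ) : ZMod p)
      = ((Nat.factorial m : ℕ) : ZMod p)
        * ((-1) ^ m * (((m + k).choose m : ℕ) : ZMod p)) := by
    rw [hd, show k + m = m + k from by ring]
    ring
  exact mul_left_cancel₀ hfac hd'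

lemma choose_congr {m k : ℕ} (hmk : m + k ≤ p - 1) (hp1 : 1 ≤ p) :
    (p : ℤ) ∣ ((p - 1 - k).choose m : ℤ) - (-1) ^ m * ((m + k).choose m : ℤ) := by
  have hzm := choose_zmod_congr (p := p) hmk hp1
  have h0 : ((((p - 1 - k).choose m : ℤ) - (-1) ^ m * ((m + k).choose m : ℤ) : ℤ) : ZMod p)
      = 0 := by
    push_cast
    rw [hzm]
    ring
  exact (ZMod.intCast_zmod_eq_zero_iff_dvd _ p).mp h0

lemma Icc_one_eq_Ioc (N : ℕ) : Finset.Icc 1 N = Finset.Ioc 0 N := by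
  ext x
  simp only [Finset.mem_Icc, Finset.mem_Ioc]
  omega

lemma Hq_split {j : ℕ} (hj : j ≤ p - 1) :
    Hq p (p - 1) = Hq p (p - 1 - j) + ∑ i ∈ Finset.Icc 1 j, (1 : ℚ_[p]) / ((p - i : ℕ) : ℚ_[p]) := by
  have hsplit := Finset.sum_Ioc_consecutive (f := fun i : ℕ => (1 : ℚ_[p]) / (i : ℚ_[p]))
    (Nat.zero_le (p - 1 - j)) (Nat.sub_le (p - 1) j)
  have hre : ∑ i ∈ Finset.Ioc (p - 1 - j) (p - 1), (1 : ℚ_[p]) / (i : ℚ_[p])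
      = ∑ i ∈ Finset.Icc 1 j, (1 : ℚ_[p]) / ((p - i : ℕ) : ℚ_[p]) := by
    refine (Finset.sum_nbij' (fun i => p - i) (fun i => p - i) ?_ ?_ ?_ ?_ ?_).symm
    · intro a ha; rw [Finset.mem_Icc] at ha; rw [Finset.mem_Ioc]; omega
    · intro a ha; rw [Finset.mem_Ioc] at ha; rw [Finset.mem_Icc]; omega
    · intro a ha; rw [Finset.mem_Icc] at ha; omega
    · intro a ha; rw [Finset.mem_Ioc] at ha; omega
    · intro a ha; rfl
  rw [Hq, Hq, Icc_one_eq_Ioc, Icc_one_eq_Ioc, ← hsplit, hre]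

lemma pair_eq {i : ℕ} (h1 : 1 ≤ i) (h2 : i ≤ p - 1) :
    (1 : ℚ_[p]) / ((p - i : ℕ) : ℚ_[p]) + (1 : ℚ_[p]) / (i : ℚ_[p])
      = (p : ℚ_[p]) / (((p - i : ℕ) : ℚ_[p]) * (i : ℚ_[p])) := by
  have hplt := hp.out.one_lt
  have ha : ((p - i : ℕ) : ℚ_[p]) ≠ 0 := by
    exact_mod_cast Nat.cast_ne_zero.mpr (show p - i ≠ 0 by omega)
  have hb : ((i : ℕ) : ℚ_[p]) ≠ 0 := by
    exact_mod_cast Nat.cast_ne_zero.mpr (show i ≠ 0 by omega)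
  field_simp
  rw [← Nat.cast_add]
  norm_cast
  omega

lemma pair_norm {i : ℕ} (h1 : 1 ≤ i) (h2 : i ≤ p - 1) :
    ‖(p : ℚ_[p]) / (((p - i : ℕ) : ℚ_[p]) * (i : ℚ_[p]))‖ = (p : ℝ)⁻¹ := by
  have hplt := hp.out.one_lt
  have hnd1 : ¬ p ∣ (p - i) := fun hd => by
    have := Nat.le_of_dvd (by omega) hd; omega
  have hnd2 : ¬ p ∣ i := fun hd => by
    have := Nat.le_of_dvd (by omega) hd; omega
  rw [norm_div, norm_mul, norm_nat_eq_one hnd1, norm_nat_eq_one hnd2,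
    Padic.norm_p]
  norm_num

lemma pair_sum_norm {j : ℕ} (hj : j ≤ p - 1) :
    ‖∑ i ∈ Finset.Icc 1 j, ((1 : ℚ_[p]) / ((p - i : ℕ) : ℚ_[p]) + (1 : ℚ_[p]) / (i : ℚ_[p]))‖
      ≤ (p : ℝ)⁻¹ := by
  refine norm_sum_le (by positivity) fun i hi => ?_
  rw [Finset.mem_Icc] at hi
  rw [pair_eq hi.1 (le_trans hi.2 hj), pair_norm hi.1 (le_trans hi.2 hj)]

lemma Hq_top_norm (hp3 : 2 < p) : ‖Hq p (p - 1)‖ ≤ (p : ℝ)⁻¹ := by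
  have hplt := hp.out.one_lt
  have hrefl : ∑ i ∈ Finset.Icc 1 (p - 1), (1 : ℚ_[p]) / ((p - i : ℕ) : ℚ_[p]) = Hq p (p - 1) := by
    rw [Hq]
    refine Finset.sum_nbij' (fun i => p - i) (fun i => p - i) ?_ ?_ ?_ ?_ ?_
    · intro a ha; rw [Finset.mem_Icc] at *; omega
    · intro a ha; rw [Finset.mem_Icc] at *; omega
    · intro a ha; rw [Finset.mem_Icc] at ha; omega
    · intro a ha; rw [Finset.mem_Icc] at ha; omega
    · intro a ha; rfl
  have h2 : (2 : ℚ_[p]) * Hq p (p - 1)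
      = ∑ i ∈ Finset.Icc 1 (p - 1),
          ((1 : ℚ_[p]) / ((p - i : ℕ) : ℚ_[p]) + (1 : ℚ_[p]) / (i : ℚ_[p])) := by
    rw [Finset.sum_add_distrib, hrefl, Hq, two_mul]
  have hsum := pair_sum_norm (p := p) (le_refl (p - 1))
  rw [← h2, norm_mul] at hsum
  have h2norm : ‖(2 : ℚ_[p])‖ = 1 := by
    have : ¬ p ∣ 2 := fun hd => by have := Nat.le_of_dvd (by norm_num) hd; omega
    simpa using norm_nat_eq_one (p := p) this
  rw [h2norm, one_mul] at hsum
  exact hsum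

lemma Hq_reflect {j : ℕ} (hj : j ≤ p - 1) (hp3 : 2 < p) :
    ‖Hq p (p - 1 - j) - Hq p j‖ ≤ (p : ℝ)⁻¹ := by
  have hsplit := Hq_split (p := p) hj
  have key : Hq p (p - 1 - j) - Hq p j
      = Hq p (p - 1)
        - ∑ i ∈ Finset.Icc 1 j,
            ((1 : ℚ_[p]) / ((p - i : ℕ) : ℚ_[p]) + (1 : ℚ_[p]) / (i : ℚ_[p])) := by
    rw [hsplit, Finset.sum_add_distrib]
    rw [show Hq p j = ∑ i ∈ Finset.Icc 1 j, (1 : ℚ_[p]) / (i : ℚ_[p]) from rfl]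
    ring
  rw [key, sub_eq_add_neg]
  refine le_trans (Padic.nonarchimedean _ _) (max_le (Hq_top_norm hp3) ?_)
  rw [norm_neg]
  exact pair_sum_norm hj

lemma key_congr (n m k : ℕ) (hp3 : 3 < p) (hm : p - 1 = m * n) (hk : m + k ≤ p - 1) :
    ‖(((p - 1 - k).choose m : ℕ) : ℚ_[p]) ^ n * (Hq p (p - 1 - (m + k))) ^ 2
      - (((m + k).choose m : ℕ) : ℚ_[p]) ^ n * (Hq p (m + k)) ^ 2‖ ≤ (p : ℝ)⁻¹ := by
  have hplt := hp.out.one_lt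
  have hd := choose_congr (p := p) hk hplt.le
  set a : ℚ_[p] := (((p - 1 - k).choose m : ℕ) : ℚ_[p]) with ha_def
  set c : ℚ_[p] := (((m + k).choose m : ℕ) : ℚ_[p]) with hc_def
  set y : ℚ_[p] := (-1) ^ m * c with hy_def
  have h1 : ‖a - y‖ ≤ (p : ℝ)⁻¹ := by
    have hdvd : ((p : ℤ) ^ 1) ∣ (((p - 1 - k).choose m : ℤ) - (-1) ^ m * ((m + k).choose m : ℤ)) := by
      simpa using hd
    have hnorm := (Padic.norm_int_le_pow_iff_dvd (p := p) _ 1).mpr hdvd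
    have hcast : ((((p - 1 - k).choose m : ℤ) - (-1) ^ m * ((m + k).choose m : ℤ) : ℤ) : ℚ_[p])
        = a - y := by
      push_cast [ha_def, hy_def, hc_def]
      ring
    rw [hcast] at hnorm
    simpa using hnorm
  have ha1 : ‖a‖ ≤ 1 := norm_nat_le_one _
  have hc1 : ‖c‖ ≤ 1 := norm_nat_le_one _
  have hy1 : ‖y‖ ≤ 1 := by
    rw [hy_def, norm_mul]
    have : ‖((-1 : ℚ_[p])) ^ m‖ = 1 := by simp
    rw [this, one_mul]
    exact hc1
  have hpow : ‖a ^ n - y ^ n‖ ≤ (p : ℝ)⁻¹ := pow_congr ha1 hy1 h1 n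
  have hyn : y ^ n = c ^ n := by
    have hodd : Odd p := hp.out.odd_of_ne_two (by omega)
    have heven : Even (p - 1) := Nat.Odd.sub_odd hodd odd_one
    rw [hy_def, mul_pow, ← pow_mul, ← hm, heven.neg_one_pow, one_mul]
  rw [hyn] at hpow
  have hH := Hq_reflect (p := p) (j := m + k) hk (by omega)
  have hH1 : ‖Hq p (p - 1 - (m + k))‖ ≤ 1 := Hq_norm_le_one (by omega)
  have hH2 : ‖Hq p (m + k)‖ ≤ 1 := Hq_norm_le_one (by omega)
  have hsq : ‖(Hq p (p - 1 - (m + k))) ^ 2 - (Hq p (m + k)) ^ 2‖ ≤ (p : ℝ)⁻¹ :=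
    pow_congr hH1 hH2 hH 2
  refine mul_congr ?_ ?_ hpow hsq
  · rw [norm_pow]
    exact pow_le_one₀ (norm_nonneg _) hH1
  · rw [norm_pow]
    exact pow_le_one₀ (norm_nonneg _) hc1

lemma tail_norm (n m k N : ℕ) (hn : 3 ≤ n) (hmlt : 1 ≤ m) (hmp : m ≤ p - 1)
    (hk1 : p - m ≤ k) (hk2 : k < p) (hN : N < 2 * p) :
    ‖(((m + k).choose m : ℕ) : ℚ_[p]) ^ n * (Hq p N) ^ 2‖ ≤ (p : ℝ)⁻¹ := by
  have hplt := hp.out.one_lt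
  have hdvd : p ∣ (m + k).choose m := by
    have := Nat.Prime.dvd_choose hp.out (show m < p by omega)
      (show m + k - m < p by omega) (show p ≤ m + k by omega)
    exact this
  have hc : ‖(((m + k).choose m : ℕ) : ℚ_[p])‖ ≤ (p : ℝ)⁻¹ := norm_nat_le_inv hdvd
  have hp0 : (p : ℝ) ≠ 0 := by positivity
  have hp1 : (1 : ℝ) ≤ (p : ℝ) := by exact_mod_cast hplt.le
  have hinv1 : (p : ℝ)⁻¹ ≤ 1 := by
    rw [inv_le_one_iff₀]; right; exact hp1
  calc ‖(((m + k).choose m : ℕ) : ℚ_[p]) ^ n * (Hq p N) ^ 2‖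
      = ‖(((m + k).choose m : ℕ) : ℚ_[p])‖ ^ n * ‖Hq p N‖ ^ 2 := by
        rw [norm_mul, norm_pow, norm_pow]
    _ ≤ ((p : ℝ)⁻¹) ^ n * (p : ℝ) ^ 2 := by
        refine mul_le_mul (pow_le_pow_left₀ (norm_nonneg _) hc n)
          (pow_le_pow_left₀ (norm_nonneg _) (Hq_norm_le_p hN) 2) (by positivity) (by positivity)
    _ ≤ ((p : ℝ)⁻¹) ^ 3 * (p : ℝ) ^ 2 := by
        refine mul_le_mul_of_nonneg_right ?_ (by positivity)
        exact pow_le_pow_of_le_one (by positivity) hinv1 hn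
    _ = (p : ℝ)⁻¹ := by
        field_simp

end HSC

/-- squared harmonic-sum congruence modulo `p` for
`∑_{k=0}^{p-1} C(m+k,m)^n (∑_{j=1}^k 1/j)²`. -/
theorem harmonic_square_congruence_mod_p (n p m : ℕ) [Fact p.Prime]
    (hn : 3 ≤ n) (hp : 3 < p) (hpn : p ≡ 1 [MOD n]) (hm : p - 1 = m * n) :
    ‖((∑ k ∈ Finset.range p, (Nat.choose (m + k) m : ℚ) ^ n *
        (∑ j ∈ Finset.Icc 1 k, (1 : ℚ) / j) ^ 2 : ℚ) : ℚ_[p])‖ ≤ 1 ∧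
    ‖((∑ k ∈ Finset.range p, (Nat.choose (m + k) m : ℚ) ^ n *
        (∑ j ∈ Finset.Icc 1 (k + m), (1 : ℚ) / j) ^ 2 : ℚ) : ℚ_[p])‖ ≤ 1 ∧
    ‖((∑ k ∈ Finset.range p, (Nat.choose (m + k) m : ℚ) ^ n *
        (∑ j ∈ Finset.Icc 1 k, (1 : ℚ) / j) ^ 2 : ℚ) : ℚ_[p]) -
      ((∑ k ∈ Finset.range p, (Nat.choose (m + k) m : ℚ) ^ n *
        (∑ j ∈ Finset.Icc 1 (k + m), (1 : ℚ) / j) ^ 2 : ℚ) : ℚ_[p])‖ ≤ (p : ℝ) ^ (-1 : ℤ) := by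
  classical
  have hprime : p.Prime := Fact.out
  have hm1 : 1 ≤ m := by
    rcases Nat.eq_zero_or_pos m with h0 | h
    · exfalso; rw [h0, zero_mul] at hm; omega
    · exact h
  have hmp : m ≤ p - 1 := by
    calc m = m * 1 := (mul_one m).symm
      _ ≤ m * n := Nat.mul_le_mul_left m (by omega)
      _ = p - 1 := hm.symm
  -- rewrite the casted rational sums as `ℚ_[p]`-sums
  have cast1 : ((∑ k ∈ Finset.range p, (Nat.choose (m + k) m : ℚ) ^ n *
        (∑ j ∈ Finset.Icc 1 k, (1 : ℚ) / j) ^ 2 : ℚ) : ℚ_[p])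
      = ∑ k ∈ Finset.range p,
          (((m + k).choose m : ℕ) : ℚ_[p]) ^ n * (HSC.Hq p k) ^ 2 := by
    simp only [HSC.Hq]
    push_cast
    rfl
  have cast2 : ((∑ k ∈ Finset.range p, (Nat.choose (m + k) m : ℚ) ^ n *
        (∑ j ∈ Finset.Icc 1 (k + m), (1 : ℚ) / j) ^ 2 : ℚ) : ℚ_[p])
      = ∑ k ∈ Finset.range p,
          (((m + k).choose m : ℕ) : ℚ_[p]) ^ n * (HSC.Hq p (k + m)) ^ 2 := by
    simp only [HSC.Hq]
    push_cast
    rfl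
  set F1 : ℕ → ℚ_[p] := fun k => (((m + k).choose m : ℕ) : ℚ_[p]) ^ n * (HSC.Hq p k) ^ 2
    with hF1
  set F2 : ℕ → ℚ_[p] := fun k => (((m + k).choose m : ℕ) : ℚ_[p]) ^ n * (HSC.Hq p (k + m)) ^ 2
    with hF2
  rw [cast1, cast2]
  have hterm1 : ∀ k ∈ Finset.range p, ‖F1 k‖ ≤ 1 := by
    intro k hk
    rw [Finset.mem_range] at hk
    rw [hF1]
    dsimp only
    rw [norm_mul, norm_pow, norm_pow]
    exact mul_le_one₀ (pow_le_one₀ (norm_nonneg _) (HSC.norm_nat_le_one _)) (by positivity)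
      (pow_le_one₀ (norm_nonneg _) (HSC.Hq_norm_le_one hk))
  have hpinv_le_one : (p : ℝ)⁻¹ ≤ 1 := by
    rw [inv_le_one_iff₀]; right; exact_mod_cast hprime.one_lt.le
  have htail : ∀ k, p - m ≤ k → k < p → ∀ N, N < 2 * p →
      ‖(((m + k).choose m : ℕ) : ℚ_[p]) ^ n * (HSC.Hq p N) ^ 2‖ ≤ (p : ℝ)⁻¹ :=
    fun k hk1 hk2 N hN => HSC.tail_norm n m k N hn hm1 hmp hk1 hk2 hN
  have hterm2 : ∀ k ∈ Finset.range p, ‖F2 k‖ ≤ 1 := by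
    intro k hk
    rw [Finset.mem_range] at hk
    rw [hF2]
    dsimp only
    by_cases hcase : k < p - m
    · rw [norm_mul, norm_pow, norm_pow]
      exact mul_le_one₀ (pow_le_one₀ (norm_nonneg _) (HSC.norm_nat_le_one _)) (by positivity)
        (pow_le_one₀ (norm_nonneg _) (HSC.Hq_norm_le_one (by omega)))
    · exact le_trans (htail k (by omega) hk (k + m) (by omega)) hpinv_le_one
  refine ⟨HSC.norm_sum_le zero_le_one hterm1, HSC.norm_sum_le zero_le_one hterm2, ?_⟩
  -- the difference
  have hz : ((p : ℝ) ^ (-1 : ℤ)) = (p : ℝ)⁻¹ := by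
    rw [zpow_neg, zpow_one]
  rw [hz]
  have hsplit : ∀ f : ℕ → ℚ_[p],
      ∑ k ∈ Finset.range p, f k
        = ∑ k ∈ Finset.range (p - m), f k + ∑ k ∈ Finset.Ico (p - m) p, f k := by
    intro f
    rw [Finset.range_eq_Ico, Finset.range_eq_Ico]
    exact (Finset.sum_Ico_consecutive f (Nat.zero_le (p - m)) (Nat.sub_le p m)).symm
  rw [hsplit F1, hsplit F2]
  have hmain : ‖∑ k ∈ Finset.range (p - m), F1 k - ∑ k ∈ Finset.range (p - m), F2 k‖
      ≤ (p : ℝ)⁻¹ := by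
    rw [← Finset.sum_range_reflect F1 (p - m), ← Finset.sum_sub_distrib]
    refine HSC.norm_sum_le (by positivity) fun k hk => ?_
    rw [Finset.mem_range] at hk
    have e1 : m + (p - m - 1 - k) = p - 1 - k := by omega
    have e2 : p - m - 1 - k = p - 1 - (m + k) := by omega
    have e3 : k + m = m + k := by omega
    rw [hF1, hF2]
    dsimp only
    rw [e1, e2, e3]
    exact HSC.key_congr n m k hp hm (by omega)
  have htails : ‖∑ k ∈ Finset.Ico (p - m) p, F1 k - ∑ k ∈ Finset.Ico (p - m) p, F2 k‖
      ≤ (p : ℝ)⁻¹ := by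
    rw [← Finset.sum_sub_distrib]
    refine HSC.norm_sum_le (by positivity) fun k hk => ?_
    rw [Finset.mem_Ico] at hk
    refine le_trans (HSC.norm_sub_le_max _ _) (max_le ?_ ?_)
    · exact htail k hk.1 hk.2 k (by omega)
    · exact htail k hk.1 hk.2 (k + m) (by omega)
  calc ‖(∑ k ∈ Finset.range (p - m), F1 k + ∑ k ∈ Finset.Ico (p - m) p, F1 k)
        - (∑ k ∈ Finset.range (p - m), F2 k + ∑ k ∈ Finset.Ico (p - m) p, F2 k)‖
      = ‖(∑ k ∈ Finset.range (p - m), F1 k - ∑ k ∈ Finset.range (p - m), F2 k)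
        + (∑ k ∈ Finset.Ico (p - m) p, F1 k - ∑ k ∈ Finset.Ico (p - m) p, F2 k)‖ := by
        congr 1; ring
    _ ≤ max ‖∑ k ∈ Finset.range (p - m), F1 k - ∑ k ∈ Finset.range (p - m), F2 k‖
          ‖∑ k ∈ Finset.Ico (p - m) p, F1 k - ∑ k ∈ Finset.Ico (p - m) p, F2 k‖ :=
        Padic.nonarchimedean _ _
    _ ≤ (p : ℝ)⁻¹ := max_le hmain htails
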